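/- Let G be a connected P10-free graph in which every induced odd cycle has length 7, with no comparable pair of non-adjacent vertices, and let C be an induced 7-cycle in G. Then every vertex of G is at distance at most 3 from C. -/

import Mathlib

open SimpleGraph

/-- `c` lists the vertices of an induced cycle of length `n` in `G`:
the map is injective and adjacency holds exactly between consecutive vertices. -/
def IsInducedCycle {V : Type*} (G : SimpleGraph V) (n : ℕ) (c : ZMod n → V) : Prop :=
  Function.Injective c ∧ ∀ i j, G.Adj (c i) (c j) ↔ (i = j + 1 ∨ j = i + 1)

def HasInducedCycle {V : Type*} (G : SimpleGraph V) (n : ℕ) : Prop :=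
  ∃ c : ZMod n → V, IsInducedCycle G n c

/-- `G` contains an induced path on `n` vertices. -/
def HasInducedPath {V : Type*} (G : SimpleGraph V) (n : ℕ) : Prop :=
  ∃ p : Fin n → V, Function.Injective p ∧
    ∀ i j, G.Adj (p i) (p j) ↔ (i.val + 1 = j.val ∨ j.val + 1 = i.val)

/-- no pair of distinct non-adjacent vertices with comparable neighborhoods. -/
def NoComparablePair {V : Type*} (G : SimpleGraph V) : Prop :=
  ∀ u v : V, u ≠ v → ¬ G.Adj u v →
    ¬ (G.neighborSet u ⊆ G.neighborSet v ∨ G.neighborSet v ⊆ G.neighborSet u)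

/-- every induced odd cycle of `G` has length 7. -/
def OddCyclesAre7 {V : Type*} (G : SimpleGraph V) : Prop :=
  ∀ n : ℕ, 3 ≤ n → Odd n → HasInducedCycle G n → n = 7

/-- distance from a vertex to an (induced) 7-cycle given by `c`. -/
noncomputable def distToCycle {V : Type*} (G : SimpleGraph V) (c : ZMod 7 → V) (x : V) : ℕ :=
  sInf {d : ℕ | ∃ i : ZMod 7, G.dist x (c i) = d}

/-- `A_i`: vertices whose neighborhood on the cycle is exactly `{c i}`. -/
def Aset {V : Type*} (G : SimpleGraph V) (c : ZMod 7 → V) (i : ZMod 7) : Set V :=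
  {x | G.neighborSet x ∩ Set.range c = {c i}}

/-- `B_i`: vertices whose neighborhood on the cycle is exactly `{c (i-1), c (i+1)}`. -/
def Bset {V : Type*} (G : SimpleGraph V) (c : ZMod 7 → V) (i : ZMod 7) : Set V :=
  {x | G.neighborSet x ∩ Set.range c = {c (i - 1), c (i + 1)}}

/-- the closed neighborhood `N[C]` of the cycle. -/
def closedNbhd {V : Type*} (G : SimpleGraph V) (c : ZMod 7 → V) : Set V :=
  Set.range c ∪ {x | ∃ i : ZMod 7, G.Adj x (c i)}
section Stmt3Helpers

variable {V : Type*} {G : SimpleGraph V}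

lemma st3_adj_dist_le {u v : V} (h : G.Adj u v) : G.dist u v ≤ 1 :=
  (SimpleGraph.dist_eq_one_iff_adj.mpr h).le

lemma st3_dist_getVert_le (hconn : G.Connected) {u v : V} (W : G.Walk u v) :
    ∀ m : ℕ, G.dist u (W.getVert m) ≤ m := by
  induction W with
  | nil => intro m; simp [SimpleGraph.Walk.getVert, SimpleGraph.dist_self]
  | cons h p ih =>
    intro m
    cases m with
    | zero => simp [SimpleGraph.Walk.getVert, SimpleGraph.dist_self]
    | succ n =>
      calc G.dist _ _ ≤ G.dist _ _ + G.dist _ _ := hconn.dist_triangle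
        _ ≤ 1 + n := add_le_add (st3_adj_dist_le h) (ih n)
        _ = n + 1 := by omega

lemma st3_inducedC3 {a b d : V} (hab : G.Adj a b) (hbd : G.Adj b d) (had : G.Adj a d) :
    HasInducedCycle G 3 := by
  refine ⟨(![a, b, d] : ZMod 3 → V), ?_, ?_⟩
  · intro s t hst
    have h3 : ∀ t : ZMod 3, t = 0 ∨ t = 1 ∨ t = 2 := by decide
    rcases h3 s with rfl|rfl|rfl <;> rcases h3 t with rfl|rfl|rfl <;>
      first
      | rfl
      | exact absurd hst (by first | exact hab.ne | exact hbd.ne | exact had.ne | exact hab.ne' | exact hbd.ne' | exact had.ne')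
  · intro s t
    have h3 : ∀ t : ZMod 3, t = 0 ∨ t = 1 ∨ t = 2 := by decide
    rcases h3 s with rfl|rfl|rfl <;> rcases h3 t with rfl|rfl|rfl <;>
      first
      | exact iff_of_true (by first | exact hab | exact hbd | exact had | exact hab.symm | exact hbd.symm | exact had.symm) (by decide)
      | exact iff_of_false (G.loopless.irrefl _) (by decide)

lemma st3_noTriangle (hodd : OddCyclesAre7 G) {a b d : V}
    (hab : G.Adj a b) (hbd : G.Adj b d) (had : G.Adj a d) : False := by
  have := hodd 3 (by norm_num) (by decide) (st3_inducedC3 hab hbd had)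
  norm_num at this

lemma st3_inducedC5 (p0 p1 p2 p3 p4 : V)
    (a01 : G.Adj p0 p1) (a12 : G.Adj p1 p2) (a23 : G.Adj p2 p3) (a34 : G.Adj p3 p4)
    (a40 : G.Adj p4 p0)
    (n02 : ¬G.Adj p0 p2) (n03 : ¬G.Adj p0 p3) (n13 : ¬G.Adj p1 p3) (n14 : ¬G.Adj p1 p4)
    (n24 : ¬G.Adj p2 p4)
    (e02 : p0 ≠ p2) (e03 : p0 ≠ p3) (e13 : p1 ≠ p3) (e14 : p1 ≠ p4) (e24 : p2 ≠ p4) :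
    HasInducedCycle G 5 := by
  refine ⟨(![p0, p1, p2, p3, p4] : ZMod 5 → V), ?_, ?_⟩
  · intro s t hst
    have h5 : ∀ t : ZMod 5, t = 0 ∨ t = 1 ∨ t = 2 ∨ t = 3 ∨ t = 4 := by decide
    rcases h5 s with rfl|rfl|rfl|rfl|rfl <;> rcases h5 t with rfl|rfl|rfl|rfl|rfl <;>
      first
      | rfl
      | exact absurd hst (by first | exact a01.ne | exact a12.ne | exact a23.ne | exact a34.ne | exact a40.ne' | exact a01.ne' | exact a12.ne' | exact a23.ne' | exact a34.ne' | exact a40.ne | exact e02 | exact e03 | exact e13 | exact e14 | exact e24 | exact e02.symm | exact e03.symm | exact e13.symm | exact e14.symm | exact e24.symm)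
  · intro s t
    have h5 : ∀ t : ZMod 5, t = 0 ∨ t = 1 ∨ t = 2 ∨ t = 3 ∨ t = 4 := by decide
    rcases h5 s with rfl|rfl|rfl|rfl|rfl <;> rcases h5 t with rfl|rfl|rfl|rfl|rfl <;>
      first
      | exact iff_of_true (by first | exact a01 | exact a12 | exact a23 | exact a34 | exact a40 | exact a01.symm | exact a12.symm | exact a23.symm | exact a34.symm | exact a40.symm) (by decide)
      | exact iff_of_false (by first | exact G.loopless.irrefl _ | exact n02 | exact n03 | exact n13 | exact n14 | exact n24 | exact fun h => n02 h.symm | exact fun h => n03 h.symm | exact fun h => n13 h.symm | exact fun h => n14 h.symm | exact fun h => n24 h.symm) (by decide)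

lemma st3_pick (m : ZMod 7 → Prop)
    (h1 : ∀ k, ¬(m k ∧ m (k + 1))) (h3 : ∀ k, ¬(m k ∧ m (k + 3)))
    {i : ZMod 7} (hi : m i) :
    ∃ a, m a ∧ ¬m (a + 1) ∧ ¬m (a + 2) ∧ ¬m (a + 3) ∧ ¬m (a + 4) := by
  by_cases h : m (i + 2)
  · refine ⟨i + 2, h, ?_, ?_, ?_, ?_⟩
    · exact fun hc => h1 (i + 2) ⟨h, hc⟩
    · intro hc
      have h4 : i + 2 + 2 + 3 = i := by
        have h7 : i + 2 + 2 + 3 = i + 7 := by ring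
        rw [h7, show (7:ZMod 7) = 0 from by decide, add_zero]
      exact h3 (i + 2 + 2) ⟨hc, by rwa [h4]⟩
    · exact fun hc => h3 (i + 2) ⟨h, hc⟩
    · intro hc
      have h4 : i + 2 + 4 + 1 = i := by
        have h7 : i + 2 + 4 + 1 = i + 7 := by ring
        rw [h7, show (7:ZMod 7) = 0 from by decide, add_zero]
      exact h1 (i + 2 + 4) ⟨hc, by rwa [h4]⟩
  · refine ⟨i, hi, ?_, ?_, ?_, ?_⟩
    · exact fun hc => h1 i ⟨hi, hc⟩
    · exact h
    · exact fun hc => h3 i ⟨hi, hc⟩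
    · intro hc
      have h4 : i + 4 + 3 = i := by
        have h7 : i + 4 + 3 = i + 7 := by ring
        rw [h7, show (7:ZMod 7) = 0 from by decide, add_zero]
      exact h3 (i + 4) ⟨hc, by rwa [h4]⟩

lemma st3_buildP10 (p : Fin 10 → V)
    (a01 : G.Adj (p 0) (p 1))
    (a12 : G.Adj (p 1) (p 2))
    (a23 : G.Adj (p 2) (p 3))
    (a34 : G.Adj (p 3) (p 4))
    (a45 : G.Adj (p 4) (p 5))
    (a56 : G.Adj (p 5) (p 6))
    (a67 : G.Adj (p 6) (p 7))
    (a78 : G.Adj (p 7) (p 8))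
    (a89 : G.Adj (p 8) (p 9))
    (n02 : ¬ G.Adj (p 0) (p 2))
    (n03 : ¬ G.Adj (p 0) (p 3))
    (n04 : ¬ G.Adj (p 0) (p 4))
    (n05 : ¬ G.Adj (p 0) (p 5))
    (n06 : ¬ G.Adj (p 0) (p 6))
    (n07 : ¬ G.Adj (p 0) (p 7))
    (n08 : ¬ G.Adj (p 0) (p 8))
    (n09 : ¬ G.Adj (p 0) (p 9))
    (n13 : ¬ G.Adj (p 1) (p 3))
    (n14 : ¬ G.Adj (p 1) (p 4))
    (n15 : ¬ G.Adj (p 1) (p 5))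
    (n16 : ¬ G.Adj (p 1) (p 6))
    (n17 : ¬ G.Adj (p 1) (p 7))
    (n18 : ¬ G.Adj (p 1) (p 8))
    (n19 : ¬ G.Adj (p 1) (p 9))
    (n24 : ¬ G.Adj (p 2) (p 4))
    (n25 : ¬ G.Adj (p 2) (p 5))
    (n26 : ¬ G.Adj (p 2) (p 6))
    (n27 : ¬ G.Adj (p 2) (p 7))
    (n28 : ¬ G.Adj (p 2) (p 8))
    (n29 : ¬ G.Adj (p 2) (p 9))
    (n35 : ¬ G.Adj (p 3) (p 5))
    (n36 : ¬ G.Adj (p 3) (p 6))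
    (n37 : ¬ G.Adj (p 3) (p 7))
    (n38 : ¬ G.Adj (p 3) (p 8))
    (n39 : ¬ G.Adj (p 3) (p 9))
    (n46 : ¬ G.Adj (p 4) (p 6))
    (n47 : ¬ G.Adj (p 4) (p 7))
    (n48 : ¬ G.Adj (p 4) (p 8))
    (n49 : ¬ G.Adj (p 4) (p 9))
    (n57 : ¬ G.Adj (p 5) (p 7))
    (n58 : ¬ G.Adj (p 5) (p 8))
    (n59 : ¬ G.Adj (p 5) (p 9))
    (n68 : ¬ G.Adj (p 6) (p 8))
    (n69 : ¬ G.Adj (p 6) (p 9))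
    (n79 : ¬ G.Adj (p 7) (p 9))
    (e02 : p 0 ≠ p 2)
    (e03 : p 0 ≠ p 3)
    (e04 : p 0 ≠ p 4)
    (e05 : p 0 ≠ p 5)
    (e06 : p 0 ≠ p 6)
    (e07 : p 0 ≠ p 7)
    (e08 : p 0 ≠ p 8)
    (e09 : p 0 ≠ p 9)
    (e13 : p 1 ≠ p 3)
    (e14 : p 1 ≠ p 4)
    (e15 : p 1 ≠ p 5)
    (e16 : p 1 ≠ p 6)
    (e17 : p 1 ≠ p 7)
    (e18 : p 1 ≠ p 8)
    (e19 : p 1 ≠ p 9)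
    (e24 : p 2 ≠ p 4)
    (e25 : p 2 ≠ p 5)
    (e26 : p 2 ≠ p 6)
    (e27 : p 2 ≠ p 7)
    (e28 : p 2 ≠ p 8)
    (e29 : p 2 ≠ p 9)
    (e35 : p 3 ≠ p 5)
    (e36 : p 3 ≠ p 6)
    (e37 : p 3 ≠ p 7)
    (e38 : p 3 ≠ p 8)
    (e39 : p 3 ≠ p 9)
    (e46 : p 4 ≠ p 6)
    (e47 : p 4 ≠ p 7)
    (e48 : p 4 ≠ p 8)
    (e49 : p 4 ≠ p 9)
    (e57 : p 5 ≠ p 7)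
    (e58 : p 5 ≠ p 8)
    (e59 : p 5 ≠ p 9)
    (e68 : p 6 ≠ p 8)
    (e69 : p 6 ≠ p 9)
    (e79 : p 7 ≠ p 9) :
    HasInducedPath G 10 := by
  refine ⟨p, ?_, ?_⟩
  · intro s t hst
    fin_cases s <;> fin_cases t <;>
      first
      | rfl
      | exact absurd hst (by first | exact a01.ne | exact a12.ne | exact a23.ne | exact a34.ne | exact a45.ne | exact a56.ne | exact a67.ne | exact a78.ne | exact a89.ne | exact a01.ne' | exact a12.ne' | exact a23.ne' | exact a34.ne' | exact a45.ne' | exact a56.ne' | exact a67.ne' | exact a78.ne' | exact a89.ne' | exact e02 | exact e03 | exact e04 | exact e05 | exact e06 | exact e07 | exact e08 | exact e09 | exact e13 | exact e14 | exact e15 | exact e16 | exact e17 | exact e18 | exact e19 | exact e24 | exact e25 | exact e26 | exact e27 | exact e28 | exact e29 | exact e35 | exact e36 | exact e37 | exact e38 | exact e39 | exact e46 | exact e47 | exact e48 | exact e49 | exact e57 | exact e58 | exact e59 | exact e68 | exact e69 | exact e79 | exact e02.symm | exact e03.symm | exact e04.symm | exact e05.symm | exact e06.symm | exact e07.symm |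 exact e08.symm | exact e09.symm | exact e13.symm | exact e14.symm | exact e15.symm | exact e16.symm | exact e17.symm | exact e18.symm | exact e19.symm | exact e24.symm | exact e25.symm | exact e26.symm | exact e27.symm | exact e28.symm | exact e29.symm | exact e35.symm | exact e36.symm | exact e37.symm | exact e38.symm | exact e39.symm | exact e46.symm | exact e47.symm | exact e48.symm | exact e49.symm | exact e57.symm | exact e58.symm | exact e59.symm | exact e68.symm | exact e69.symm | exact e79.symm)
  · intro s t
    fin_cases s <;> fin_cases t <;>
      first
      | exact iff_of_true (by first | exact a01 | exact a12 | exact a23 | exact a34 | exact a45 | exact a56 | exact a67 | exact a78 | exact a89 | exact a01.symm | exact a12.symm | exact a23.symm | exact a34.symm | exact a45.symm | exact a56.symm | exact a67.symm | exact a78.symm | exact a89.symm) (by decide)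
      | exact iff_of_false (by first | exact G.loopless.irrefl _ | exact n02 | exact n03 | exact n04 | exact n05 | exact n06 | exact n07 | exact n08 | exact n09 | exact n13 | exact n14 | exact n15 | exact n16 | exact n17 | exact n18 | exact n19 | exact n24 | exact n25 | exact n26 | exact n27 | exact n28 | exact n29 | exact n35 | exact n36 | exact n37 | exact n38 | exact n39 | exact n46 | exact n47 | exact n48 | exact n49 | exact n57 | exact n58 | exact n59 | exact n68 | exact n69 | exact n79 | exact fun h => n02 h.symm | exact fun h => n03 h.symm | exact fun h => n04 h.symm | exact fun h => n05 h.symm | exact fun h => n06 h.symm | exact fun h => n07 h.symm | exact fun h => n08 h.symm | exact fun h => n09 h.symm | exact fun h => n13 h.symm | exact fun h => n14 h.symm | exact fun h => n15 h.symm | exact fun h => n16 h.symm | exact fun h => n17 h.symm | exact fun h => n18 h.symm | exact fun h => n19 h.symm | exact fun h => n24 h.symm | exact fun h => n25 h.symm | exact fun h => n26 h.symm | exact fun h => n27 h.symm | exact fun h => n28 h.symm | exact fun h => n29 h.symm | exact fun h => n35 h.symm | exact fun h => n36 h.symm | exact fun h => n37 h.symm | exact fun h => n38 h.symm | exact fun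 h => n39 h.symm | exact fun h => n46 h.symm | exact fun h => n47 h.symm | exact fun h => n48 h.symm | exact fun h => n49 h.symm | exact fun h => n57 h.symm | exact fun h => n58 h.symm | exact fun h => n59 h.symm | exact fun h => n68 h.symm | exact fun h => n69 h.symm | exact fun h => n79 h.symm) (by decide)

end Stmt3Helpers
theorem stmt3 {V : Type*} [Fintype V] (G : SimpleGraph V)
    (hconn : G.Connected) (hP : ¬ HasInducedPath G 10)
    (hodd : OddCyclesAre7 G) (hcomp : NoComparablePair G)
    (c : ZMod 7 → V) (hc : IsInducedCycle G 7 c) :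
    ∀ x : V, distToCycle G c x ≤ 3 := by
  intro x
  by_contra hx
  push_neg at hx
  have hxx : 3 < sInf {d : ℕ | ∃ i : ZMod 7, G.dist x (c i) = d} := hx
  have hSne : {d : ℕ | ∃ i : ZMod 7, G.dist x (c i) = d}.Nonempty := ⟨G.dist x (c 0), 0, rfl⟩
  have hmem := Nat.sInf_mem hSne
  have hmin : ∀ j : ZMod 7, sInf {d : ℕ | ∃ i : ZMod 7, G.dist x (c i) = d} ≤ G.dist x (c j) :=
    fun j => Nat.sInf_le ⟨j, rfl⟩
  set D := sInf {d : ℕ | ∃ i : ZMod 7, G.dist x (c i) = d} with hDdef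
  obtain ⟨i, hi⟩ := hmem
  have hD4 : 4 ≤ D := by omega
  obtain ⟨W, hWl0⟩ := hconn.exists_walk_length_eq_dist x (c i)
  have hWl : W.length = D := by rw [hWl0, hi]
  have hup : ∀ m, G.dist x (W.getVert m) ≤ m := st3_dist_getVert_le hconn W
  have hlow : ∀ (k : ℕ) (j : ZMod 7), k ≤ D → k ≤ G.dist (W.getVert (D - k)) (c j) := by
    intro k j hk
    have h1 : G.dist x (c j) ≤ G.dist x (W.getVert (D - k)) + G.dist (W.getVert (D - k)) (c j) :=
      hconn.dist_triangle
    have h2 := hup (D - k)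
    have h3 := hmin j
    omega
  have hadjW : ∀ k, k < D → G.Adj (W.getVert k) (W.getVert (k + 1)) := by
    intro k hk
    exact W.adj_getVert_succ (by rw [hWl]; exact hk)
  set v1 := W.getVert (D - 1) with hv1
  set v2 := W.getVert (D - 2) with hv2
  set v3 := W.getVert (D - 3) with hv3
  set v4 := W.getVert (D - 4) with hv4
  have hgetD : W.getVert D = c i := by rw [← hWl]; exact W.getVert_length
  have ha43 : G.Adj v4 v3 := by
    have := hadjW (D - 4) (by omega); rwa [show D - 4 + 1 = D - 3 from by omega] at this
  have ha32 : G.Adj v3 v2 := by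
    have := hadjW (D - 3) (by omega); rwa [show D - 3 + 1 = D - 2 from by omega] at this
  have ha21 : G.Adj v2 v1 := by
    have := hadjW (D - 2) (by omega); rwa [show D - 2 + 1 = D - 1 from by omega] at this
  have ha1c : G.Adj v1 (c i) := by
    have := hadjW (D - 1) (by omega); rwa [show D - 1 + 1 = D from by omega, hgetD] at this
  have hd1 : G.dist v1 (c i) = 1 := by
    have hlo := hlow 1 i (by omega); rw [← hv1] at hlo
    exact le_antisymm (st3_adj_dist_le ha1c) hlo
  have hd2 : G.dist v2 (c i) = 2 := by
    have hle : G.dist v2 (c i) ≤ G.dist v2 v1 + G.dist v1 (c i) := hconn.dist_triangle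
    have h1 := st3_adj_dist_le ha21
    have hlo := hlow 2 i (by omega); rw [← hv2] at hlo
    omega
  have hd3 : G.dist v3 (c i) = 3 := by
    have hle : G.dist v3 (c i) ≤ G.dist v3 v2 + G.dist v2 (c i) := hconn.dist_triangle
    have h1 := st3_adj_dist_le ha32
    have hlo := hlow 3 i (by omega); rw [← hv3] at hlo
    omega
  have hd4 : G.dist v4 (c i) = 4 := by
    have hle : G.dist v4 (c i) ≤ G.dist v4 v3 + G.dist v3 (c i) := hconn.dist_triangle
    have h1 := st3_adj_dist_le ha43
    have hlo := hlow 4 i (by omega); rw [← hv4] at hlo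
    omega
  have hl1 : ∀ j, 1 ≤ G.dist v1 (c j) := fun j => by have := hlow 1 j (by omega); rwa [← hv1] at this
  have hl2 : ∀ j, 2 ≤ G.dist v2 (c j) := fun j => by have := hlow 2 j (by omega); rwa [← hv2] at this
  have hl3 : ∀ j, 3 ≤ G.dist v3 (c j) := fun j => by have := hlow 3 j (by omega); rwa [← hv3] at this
  have hl4 : ∀ j, 4 ≤ G.dist v4 (c j) := fun j => by have := hlow 4 j (by omega); rwa [← hv4] at this
  -- vertices off the cycle
  have hn1c : ∀ j, v1 ≠ c j := by
    intro j h; have := hl1 j; rw [h] at this; simp [SimpleGraph.dist_self] at this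
  have hn2c : ∀ j, v2 ≠ c j := by
    intro j h; have := hl2 j; rw [h] at this; simp [SimpleGraph.dist_self] at this
  have hn3c : ∀ j, v3 ≠ c j := by
    intro j h; have := hl3 j; rw [h] at this; simp [SimpleGraph.dist_self] at this
  have hn4c : ∀ j, v4 ≠ c j := by
    intro j h; have := hl4 j; rw [h] at this; simp [SimpleGraph.dist_self] at this
  have hnv2c : ∀ j, ¬ G.Adj v2 (c j) := by
    intro j h; have := st3_adj_dist_le h; have := hl2 j; omega
  have hnv3c : ∀ j, ¬ G.Adj v3 (c j) := by
    intro j h; have := st3_adj_dist_le h; have := hl3 j; omega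
  have hnv4c : ∀ j, ¬ G.Adj v4 (c j) := by
    intro j h; have := st3_adj_dist_le h; have := hl4 j; omega
  have hn42 : ¬ G.Adj v4 v2 := by
    intro h
    have t1 : G.dist v4 (c i) ≤ G.dist v4 v2 + G.dist v2 (c i) := hconn.dist_triangle
    have := st3_adj_dist_le h; omega
  have hn41 : ¬ G.Adj v4 v1 := by
    intro h
    have t1 : G.dist v4 (c i) ≤ G.dist v4 v1 + G.dist v1 (c i) := hconn.dist_triangle
    have := st3_adj_dist_le h; omega
  have hn31 : ¬ G.Adj v3 v1 := by
    intro h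
    have t1 : G.dist v3 (c i) ≤ G.dist v3 v1 + G.dist v1 (c i) := hconn.dist_triangle
    have := st3_adj_dist_le h; omega
  have he42 : v4 ≠ v2 := by intro h; rw [h] at hd4; omega
  have he41 : v4 ≠ v1 := by intro h; rw [h] at hd4; omega
  have he31 : v3 ≠ v1 := by intro h; rw [h] at hd3; omega
  -- cycle adjacency facts
  have hcyc : ∀ k : ZMod 7, G.Adj (c k) (c (k + 1)) := fun k => (hc.2 _ _).mpr (Or.inr rfl)
  have hnc : ∀ (k t : ZMod 7), t ≠ 1 → t ≠ -1 → ¬ G.Adj (c k) (c (k + t)) := by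
    intro k t h1 hm1 hadj
    rcases (hc.2 _ _).mp hadj with h | h
    · have h0 : k + 0 = k + (t + 1) := by rw [add_zero, ← add_assoc]; exact h
      have h0' : (0 : ZMod 7) = t + 1 := add_left_cancel h0
      exact hm1 (eq_neg_of_add_eq_zero_left h0'.symm)
    · exact h1 (add_left_cancel (show k + t = k + 1 from h))
  have hcne : ∀ (k t : ZMod 7), t ≠ 0 → c k ≠ c (k + t) := by
    intro k t ht h
    exact ht (add_left_cancel (show k + 0 = k + t from by rw [add_zero]; exact hc.1 h)).symm
  -- classification of v1's neighbours on the cycle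
  have hm1 : ∀ k : ZMod 7, ¬ (G.Adj v1 (c k) ∧ G.Adj v1 (c (k + 1))) := by
    rintro k ⟨h1, h2⟩
    exact st3_noTriangle hodd h1 (hcyc k) h2
  have hm3 : ∀ k : ZMod 7, ¬ (G.Adj v1 (c k) ∧ G.Adj v1 (c (k + 3))) := by
    rintro k ⟨h1, h2⟩
    have e12 : k + 1 + 1 = k + 2 := by ring
    have e23 : k + 2 + 1 = k + 3 := by ring
    have e13 : k + 1 + 2 = k + 3 := by ring
    have nm1 : ¬ G.Adj v1 (c (k + 1)) := fun h => hm1 k ⟨h1, h⟩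
    have nm2 : ¬ G.Adj v1 (c (k + 2)) := fun h => hm1 (k + 2) ⟨h, by rwa [e23]⟩
    have hC5 := st3_inducedC5 (G := G) v1 (c k) (c (k + 1)) (c (k + 2)) (c (k + 3))
      h1 (hcyc k) (by have := hcyc (k + 1); rwa [e12] at this)
      (by have := hcyc (k + 2); rwa [e23] at this) h2.symm
      nm1 nm2 (hnc k 2 (by decide) (by decide)) (hnc k 3 (by decide) (by decide))
      (by have := hnc (k + 1) 2 (by decide) (by decide); rwa [e13] at this)
      (hn1c _) (hn1c _) (hcne k 2 (by decide)) (hcne k 3 (by decide))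
      (by have := hcne (k + 1) 2 (by decide); rwa [e13] at this)
    have := hodd 5 (by norm_num) (by decide) hC5
    norm_num at this
  obtain ⟨a, hma, hna1, hna2, hna3, hna4⟩ :=
    st3_pick (fun k => G.Adj v1 (c k)) hm1 hm3 ha1c
  -- the comparable-pair hypothesis applied to v4 and v2
  have hcompair := hcomp v4 v2 he42 hn42
  rw [not_or] at hcompair
  obtain ⟨hns, -⟩ := hcompair
  rw [Set.not_subset] at hns
  obtain ⟨y, hy1, hy2⟩ := hns
  rw [SimpleGraph.mem_neighborSet] at hy1
  have hy2' : ¬ G.Adj v2 y := fun h => hy2 ((SimpleGraph.mem_neighborSet G v2 y).mpr h)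
  have hyc : ∀ j, ¬ G.Adj y (c j) := by
    intro j h
    have t1 : G.dist v4 (c j) ≤ G.dist v4 y + G.dist y (c j) := hconn.dist_triangle
    have := st3_adj_dist_le hy1; have := st3_adj_dist_le h; have := hl4 j; omega
  have hyv1 : ¬ G.Adj y v1 := by
    intro h
    have t1 : G.dist v4 (c i) ≤ G.dist v4 y + G.dist y (c i) := hconn.dist_triangle
    have t2 : G.dist y (c i) ≤ G.dist y v1 + G.dist v1 (c i) := hconn.dist_triangle
    have := st3_adj_dist_le hy1; have := st3_adj_dist_le h; omega
  have hyv3 : ¬ G.Adj y v3 := fun h => st3_noTriangle hodd hy1 h ha43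
  have hyv2 : ¬ G.Adj y v2 := fun h => hy2' h.symm
  have hyec : ∀ j, y ≠ c j := by
    intro j h
    have := hl4 j
    rw [← h] at this
    have := st3_adj_dist_le hy1
    omega
  have hye3 : y ≠ v3 := fun h => hy2' (by rw [h]; exact ha32.symm)
  have hye2 : y ≠ v2 := fun h => hn42 (by rw [← h]; exact hy1)
  have hye1 : y ≠ v1 := fun h => hy2' (by rw [h]; exact ha21)
  -- cycle facts specialised at a
  have eA1 : a + 1 + 1 = a + 2 := by ring
  have eA2 : a + 2 + 1 = a + 3 := by ring
  have eA3 : a + 3 + 1 = a + 4 := by ring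
  have eA13 : a + 1 + 2 = a + 3 := by ring
  have eA14 : a + 1 + 3 = a + 4 := by ring
  have eA24 : a + 2 + 2 = a + 4 := by ring
  have cyc01 : G.Adj (c a) (c (a + 1)) := hcyc a
  have cyc12 : G.Adj (c (a + 1)) (c (a + 2)) := by have := hcyc (a + 1); rwa [eA1] at this
  have cyc23 : G.Adj (c (a + 2)) (c (a + 3)) := by have := hcyc (a + 2); rwa [eA2] at this
  have cyc34 : G.Adj (c (a + 3)) (c (a + 4)) := by have := hcyc (a + 3); rwa [eA3] at this
  have nc02 : ¬ G.Adj (c a) (c (a + 2)) := hnc a 2 (by decide) (by decide)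
  have nc03 : ¬ G.Adj (c a) (c (a + 3)) := hnc a 3 (by decide) (by decide)
  have nc04 : ¬ G.Adj (c a) (c (a + 4)) := hnc a 4 (by decide) (by decide)
  have nc13 : ¬ G.Adj (c (a + 1)) (c (a + 3)) := by
    have := hnc (a + 1) 2 (by decide) (by decide); rwa [eA13] at this
  have nc14 : ¬ G.Adj (c (a + 1)) (c (a + 4)) := by
    have := hnc (a + 1) 3 (by decide) (by decide); rwa [eA14] at this
  have nc24 : ¬ G.Adj (c (a + 2)) (c (a + 4)) := by
    have := hnc (a + 2) 2 (by decide) (by decide); rwa [eA24] at this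
  have ec02 : c a ≠ c (a + 2) := hcne a 2 (by decide)
  have ec03 : c a ≠ c (a + 3) := hcne a 3 (by decide)
  have ec04 : c a ≠ c (a + 4) := hcne a 4 (by decide)
  have ec13 : c (a + 1) ≠ c (a + 3) := by
    have := hcne (a + 1) 2 (by decide); rwa [eA13] at this
  have ec14 : c (a + 1) ≠ c (a + 4) := by
    have := hcne (a + 1) 3 (by decide); rwa [eA14] at this
  have ec24 : c (a + 2) ≠ c (a + 4) := by
    have := hcne (a + 2) 2 (by decide); rwa [eA24] at this
  -- build the induced P10 and conclude
  refine hP (st3_buildP10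
    (![y, v4, v3, v2, v1, c a, c (a + 1), c (a + 2), c (a + 3), c (a + 4)])
    hy1.symm ha43 ha32 ha21 hma cyc01 cyc12 cyc23 cyc34
    hyv3 hyv2 hyv1 (hyc _) (hyc _) (hyc _) (hyc _) (hyc _)
    hn42 hn41 (hnv4c _) (hnv4c _) (hnv4c _) (hnv4c _) (hnv4c _)
    hn31 (hnv3c _) (hnv3c _) (hnv3c _) (hnv3c _) (hnv3c _)
    (hnv2c _) (hnv2c _) (hnv2c _) (hnv2c _) (hnv2c _)
    hna1 hna2 hna3 hna4
    nc02 nc03 nc04 nc13 nc14 nc24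
    hye3 hye2 hye1 (hyec _) (hyec _) (hyec _) (hyec _) (hyec _)
    he42 he41 (hn4c _) (hn4c _) (hn4c _) (hn4c _) (hn4c _)
    he31 (hn3c _) (hn3c _) (hn3c _) (hn3c _) (hn3c _)
    (hn2c _) (hn2c _) (hn2c _) (hn2c _) (hn2c _)
    (hn1c _) (hn1c _) (hn1c _) (hn1c _)
    ec02 ec03 ec04 ec13 ec14 ec24)
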